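/- arXiv:2508.18191 — 2 statements merged into one kernel-verified Lean document; each statement's English description precedes it below -/
import Mathlib

section
/- Let K be a field, m ≥ 1, n ≥ 3, and let a, a_1, a_2, a_3 ∈ K be nonzero with n - km ≠ 0 in K (k a positive integer). Then the polynomials a_1(n - km) X_1^m + a, a_1 X_1^m - a_2 X_2^m, a_1 X_1^m - a_3 X_3^m form a regular sequence in K[X_1, ..., X_n]. -/
set_option maxSynthPendingDepth 3
set_option maxHeartbeats 1000000

section Aux
open Polynomial
variable {R : Type*} [CommRing R]

lemma aux_L1 [IsDomain R] (q : R[X]) (hq : q.Monic) (w : R) (h : R[X]) (hdeg : h.degree < q.degree)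
    (hmem : h ∈ Ideal.span {q, Polynomial.C w}) : Polynomial.C w ∣ h := by
  obtain ⟨u, v, huv⟩ := Ideal.mem_span_pair.mp hmem
  have hv : v %ₘ q + q * (v /ₘ q) = v := Polynomial.modByMonic_add_div v q
  have key : h - (v %ₘ q) * Polynomial.C w = (u + (v /ₘ q) * Polynomial.C w) * q := by
    linear_combination -huv - Polynomial.C w * hv
  have hdvd : q ∣ h - (v %ₘ q) * Polynomial.C w :=
    ⟨u + (v /ₘ q) * Polynomial.C w, by linear_combination key⟩
  have hdeg2 : (h - (v %ₘ q) * Polynomial.C w).degree < q.degree := by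
    refine lt_of_le_of_lt (Polynomial.degree_sub_le _ _) (max_lt hdeg ?_)
    refine lt_of_le_of_lt (Polynomial.degree_mul_le _ _) ?_
    have h1 : (v %ₘ q).degree < q.degree := Polynomial.degree_modByMonic_lt v hq
    have h2 : (Polynomial.C w).degree ≤ 0 := Polynomial.degree_C_le
    calc (v %ₘ q).degree + (Polynomial.C w).degree ≤ (v %ₘ q).degree + 0 :=
          add_le_add_right h2 _
      _ = (v %ₘ q).degree := by rw [add_zero]
      _ < q.degree := h1
  have : h - (v %ₘ q) * Polynomial.C w = 0 := by
    by_contra hne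
    exact absurd (Polynomial.degree_le_of_dvd hdvd hne) (not_le_of_gt hdeg2)
  have : h = (v %ₘ q) * Polynomial.C w := by linear_combination this
  exact ⟨v %ₘ q, by rw [this]; ring⟩

lemma aux_L2 [IsDomain R] (q : R[X]) (hq : q.Monic) (d : R) (hd : d ≠ 0) (g : R[X])
    (hdvd : q ∣ Polynomial.C d * g) : q ∣ g := by
  have hgr : g %ₘ q + q * (g /ₘ q) = g := Polynomial.modByMonic_add_div g q
  have hdvd' : q ∣ Polynomial.C d * (g %ₘ q) := by
    have : Polynomial.C d * (g %ₘ q) = Polynomial.C d * g - q * (Polynomial.C d * (g /ₘ q)) := by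
      linear_combination Polynomial.C d * hgr
    rw [this]
    exact dvd_sub hdvd ⟨_, rfl⟩
  have hz : Polynomial.C d * (g %ₘ q) = 0 := by
    by_contra hne
    have hle := Polynomial.degree_le_of_dvd hdvd' hne
    have : (Polynomial.C d * (g %ₘ q)).degree < q.degree := by
      refine lt_of_le_of_lt (Polynomial.degree_mul_le _ _) ?_
      have h1 : (g %ₘ q).degree < q.degree := Polynomial.degree_modByMonic_lt g hq
      calc (Polynomial.C d).degree + (g %ₘ q).degree ≤ 0 + (g %ₘ q).degree :=
            add_le_add_left Polynomial.degree_C_le _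
        _ = (g %ₘ q).degree := by rw [zero_add]
        _ < q.degree := h1
    exact absurd hle (not_le_of_gt this)
  have : g %ₘ q = 0 := by
    rcases mul_eq_zero.mp hz with h | h
    · exact absurd h (by simpa using hd)
    · exact h
  exact (Polynomial.modByMonic_eq_zero_iff_dvd hq).mp this
end Aux

section Aux2
open Polynomial
variable {B : Type*} [CommRing B] [IsDomain B]

lemma aux_main1 (m : ℕ) (hm : m ≠ 0) (c d : B) (hd : d ≠ 0) (g : B[X])
    (h : Polynomial.C d * g ∈ Ideal.span {Polynomial.X ^ m + Polynomial.C c}) :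
    g ∈ Ideal.span {Polynomial.X ^ m + Polynomial.C c} := by
  rw [Ideal.mem_span_singleton] at h ⊢
  exact aux_L2 _ (Polynomial.monic_X_pow_add_C c hm) d hd g h

lemma aux_main2 (m : ℕ) (hm : m ≠ 0) (c1 c2 β : B) (hβ : β ≠ 0)
    (g : Polynomial (Polynomial B))
    (hmem : Polynomial.C (Polynomial.C β) * g ∈
      Ideal.span {Polynomial.X ^ m + Polynomial.C (Polynomial.C c1),
        Polynomial.C (Polynomial.X ^ m + Polynomial.C c2)}) :
    g ∈ Ideal.span {Polynomial.X ^ m + Polynomial.C (Polynomial.C c1),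
        Polynomial.C (Polynomial.X ^ m + Polynomial.C c2)} := by
  set q1 : Polynomial (Polynomial B) := Polynomial.X ^ m + Polynomial.C (Polynomial.C c1) with hq1def
  set q2 : Polynomial B := Polynomial.X ^ m + Polynomial.C c2 with hq2def
  have hq1 : q1.Monic := Polynomial.monic_X_pow_add_C _ hm
  have hq2 : q2.Monic := Polynomial.monic_X_pow_add_C _ hm
  set J := Ideal.span {q1, Polynomial.C q2} with hJ
  have hq1J : q1 ∈ J := Ideal.subset_span (by simp)
  have hq2J : Polynomial.C q2 ∈ J := Ideal.subset_span (by simp)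
  set r := g %ₘ q1 with hr
  have hgr : r + q1 * (g /ₘ q1) = g := Polynomial.modByMonic_add_div g q1
  -- suffices r ∈ J
  suffices hrJ : r ∈ J by
    have : g = r + q1 * (g /ₘ q1) := hgr.symm
    rw [this]
    exact Ideal.add_mem _ hrJ (Ideal.mul_mem_right _ _ hq1J)
  have hmem' : Polynomial.C (Polynomial.C β) * r ∈ J := by
    have : Polynomial.C (Polynomial.C β) * r =
        Polynomial.C (Polynomial.C β) * g - q1 * (Polynomial.C (Polynomial.C β) * (g /ₘ q1)) := by
      linear_combination Polynomial.C (Polynomial.C β) * hgr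
    rw [this]
    exact Ideal.sub_mem _ hmem (Ideal.mul_mem_right _ _ hq1J)
  have hdegq1 : q1.degree = m := by
    rw [hq1def]
    exact Polynomial.degree_X_pow_add_C (Nat.pos_of_ne_zero hm) _
  have hdeg : (Polynomial.C (Polynomial.C β) * r).degree < q1.degree := by
    refine lt_of_le_of_lt (Polynomial.degree_mul_le _ _) ?_
    have h1 : r.degree < q1.degree := Polynomial.degree_modByMonic_lt g hq1
    calc (Polynomial.C (Polynomial.C β)).degree + r.degree ≤ 0 + r.degree :=
          add_le_add_left Polynomial.degree_C_le _
      _ = r.degree := by rw [zero_add]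
      _ < q1.degree := h1
  have hdvd : Polynomial.C q2 ∣ Polynomial.C (Polynomial.C β) * r :=
    aux_L1 q1 hq1 q2 _ hdeg hmem'
  have hcoeff : ∀ i, q2 ∣ (Polynomial.C β) * r.coeff i := by
    intro i
    have := (Polynomial.C_dvd_iff_dvd_coeff q2 _).mp hdvd i
    rwa [Polynomial.coeff_C_mul] at this
  have hcoeff2 : ∀ i, q2 ∣ r.coeff i := fun i => aux_L2 q2 hq2 β hβ _ (hcoeff i)
  have : Polynomial.C q2 ∣ r := (Polynomial.C_dvd_iff_dvd_coeff q2 r).mpr hcoeff2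
  obtain ⟨v, hv⟩ := this
  rw [hv]
  exact Ideal.mul_mem_right _ _ hq2J
end Aux2

lemma aux_quot {R : Type*} [CommRing R] (I : Ideal R) (r : R)
    (H : ∀ g, r * g ∈ I → g ∈ I) : IsSMulRegular (R ⧸ (I • ⊤ : Submodule R R)) r := by
  have hI : (I • ⊤ : Submodule R R) = I := by
    rw [smul_eq_mul, Ideal.mul_top]
  intro x y hxy
  obtain ⟨g, rfl⟩ := Submodule.Quotient.mk_surjective _ x
  obtain ⟨g', rfl⟩ := Submodule.Quotient.mk_surjective _ y
  simp only [← Submodule.Quotient.mk_smul] at hxy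
  rw [Submodule.Quotient.eq] at hxy ⊢
  rw [hI] at hxy ⊢
  have : r • g - r • g' = r * (g - g') := by rw [smul_eq_mul, smul_eq_mul]; ring
  rw [this] at hxy
  exact H _ hxy

lemma aux_mem_span_equiv {R S : Type*} [CommRing R] [CommRing S] (e : R ≃+* S) (s : Set R)
    (x : R) : x ∈ Ideal.span s ↔ e x ∈ Ideal.span (e '' s) := by
  have : Ideal.span (e '' s) = Ideal.map (e : R →+* S) (Ideal.span s) :=
    (Ideal.map_span _ _).symm
  rw [this]
  constructor
  · exact fun h => Ideal.mem_map_of_mem _ h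
  · intro h
    obtain ⟨y, hy, hxy⟩ := Ideal.mem_map_iff_of_surjective _ e.surjective |>.mp h
    rwa [← e.injective hxy]

lemma aux_span_ne_top {K : Type*} [Field K] {σ : Type*} (s : Set (MvPolynomial σ K))
    (L : Type*) [Field L] [Algebra K L] (v : σ → L)
    (h : ∀ f ∈ s, MvPolynomial.aeval v f = 0) : Ideal.span s ≠ ⊤ := by
  intro htop
  have hle : Ideal.span s ≤ RingHom.ker ((MvPolynomial.aeval (R := K) v).toRingHom) := by
    rw [Ideal.span_le]
    intro x hx
    rw [SetLike.mem_coe, RingHom.mem_ker]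
    exact h x hx
  have h1mem : (1 : MvPolynomial σ K) ∈ Ideal.span s := htop ▸ Submodule.mem_top
  have := hle h1mem
  rw [RingHom.mem_ker] at this
  simp at this

open MvPolynomial in
/-- The polynomials `a_1(n-km) X_1^m + a`, `a_1 X_1^m - a_2 X_2^m`, `a_1 X_1^m - a_3 X_3^m`
form a regular sequence in `K[X_1,…,X_n]` when `a, a_1, a_2, a_3 ≠ 0` and `n - km ≠ 0` in `K`. -/
theorem stmt7 (K : Type*) [Field K] (n m k : ℕ) (hn : 3 ≤ n) (hm : 1 ≤ m) (hk : 1 ≤ k)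
    (a a1 a2 a3 : K) (ha : a ≠ 0) (h1 : a1 ≠ 0) (h2 : a2 ≠ 0) (h3 : a3 ≠ 0)
    (hnkm : (n : K) - (k * m : ℕ) ≠ 0) :
    RingTheory.Sequence.IsRegular (MvPolynomial (Fin n) K)
      [C (a1 * ((n : K) - (k * m : ℕ))) * X (⟨0, by omega⟩ : Fin n) ^ m + C a,
       C a1 * X (⟨0, by omega⟩ : Fin n) ^ m - C a2 * X (⟨1, by omega⟩ : Fin n) ^ m,
       C a1 * X (⟨0, by omega⟩ : Fin n) ^ m - C a3 * X (⟨2, by omega⟩ : Fin n) ^ m] := by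
  obtain ⟨N, rfl⟩ : ∃ N, n = N + 3 := ⟨n - 3, by omega⟩
  have hm' : m ≠ 0 := by omega
  set δ : K := ((N + 3 : ℕ) : K) - ((k * m : ℕ) : K) with hδdef
  have hδ : δ ≠ 0 := hnkm
  set f1 : MvPolynomial (Fin (N+3)) K :=
    MvPolynomial.C (a1 * δ) * MvPolynomial.X (⟨0, by omega⟩ : Fin (N+3)) ^ m +
      MvPolynomial.C a with hf1
  set f2 : MvPolynomial (Fin (N+3)) K :=
    MvPolynomial.C a1 * MvPolynomial.X (⟨0, by omega⟩ : Fin (N+3)) ^ m -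
      MvPolynomial.C a2 * MvPolynomial.X (⟨1, by omega⟩ : Fin (N+3)) ^ m with hf2
  set f3 : MvPolynomial (Fin (N+3)) K :=
    MvPolynomial.C a1 * MvPolynomial.X (⟨0, by omega⟩ : Fin (N+3)) ^ m -
      MvPolynomial.C a3 * MvPolynomial.X (⟨2, by omega⟩ : Fin (N+3)) ^ m with hf3
  have hf1ne : f1 ≠ 0 := by
    intro h0
    have := congrArg MvPolynomial.constantCoeff h0
    simp only [hf1, map_add, map_mul, map_pow, MvPolynomial.constantCoeff_C,
      MvPolynomial.constantCoeff_X, zero_pow hm', mul_zero, zero_add, map_zero] at this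
    exact ha this
  set e : MvPolynomial (Fin (N+3)) K ≃ₐ[K]
      Polynomial (Polynomial (MvPolynomial (Fin (N+1)) K)) :=
    (MvPolynomial.finSuccEquiv K (N+2)).trans
      (Polynomial.mapAlgEquiv (MvPolynomial.finSuccEquiv K (N+1))) with he
  set ψ : K →+* Polynomial (Polynomial (MvPolynomial (Fin (N+1)) K)) :=
    (Polynomial.C : Polynomial (MvPolynomial (Fin (N+1)) K) →+* _).comp
      ((Polynomial.C : MvPolynomial (Fin (N+1)) K →+* _).comp
        (MvPolynomial.C : K →+* MvPolynomial (Fin (N+1)) K)) with hψ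
  have hψa : ∀ x : K, ψ x = Polynomial.C (Polynomial.C (MvPolynomial.C x)) := fun _ => rfl
  have hψu : ∀ x : K, x ≠ 0 → IsUnit (ψ x) := fun x hx => (IsUnit.mk0 x hx).map ψ
  set c1K : K := a / (a1 * δ) with hc1K
  set c2K : K := a / (a2 * δ) with hc2K
  set q1 : Polynomial (Polynomial (MvPolynomial (Fin (N+1)) K)) :=
    Polynomial.X ^ m + Polynomial.C (Polynomial.C (MvPolynomial.C c1K)) with hq1
  set q2 : Polynomial (MvPolynomial (Fin (N+1)) K) :=
    Polynomial.X ^ m + Polynomial.C (MvPolynomial.C c2K) with hq2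
  set β : MvPolynomial (Fin (N+1)) K :=
    MvPolynomial.C (a / δ) + MvPolynomial.C a3 * (MvPolynomial.X 0) ^ m with hβdef
  have hβ : β ≠ 0 := by
    intro h0
    rw [hβdef] at h0
    have := congrArg (MvPolynomial.coeff (Finsupp.single (0 : Fin (N+1)) m)) h0
    simp [MvPolynomial.coeff_C, MvPolynomial.coeff_C_mul, MvPolynomial.coeff_X_pow,
      Finsupp.single_eq_zero, hm'] at this
    rw [if_neg (fun hc => hm' (by simpa [Finsupp.single_eq_zero] using hc.symm)),
      zero_add] at this
    exact h3 this
  have h0fin : (⟨0, by omega⟩ : Fin (N+3)) = 0 := by ext; simp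
  have h1fin : (⟨1, by omega⟩ : Fin (N+3)) = Fin.succ 0 := by ext; simp
  have h2fin : (⟨2, by omega⟩ : Fin (N+3)) = Fin.succ (⟨1, by omega⟩ : Fin (N+2)) := by
    ext; simp; exact (Nat.mod_eq_of_lt (by omega)).symm
  have h1fin' : (⟨1, by omega⟩ : Fin (N+2)) = Fin.succ 0 := by ext; simp
  have he0 : e (MvPolynomial.X (⟨0, by omega⟩ : Fin (N+3))) = Polynomial.X := by
    rw [h0fin, he]
    simp [MvPolynomial.finSuccEquiv_X_zero]
  have he1 : e (MvPolynomial.X (⟨1, by omega⟩ : Fin (N+3))) = Polynomial.C Polynomial.X := by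
    rw [h1fin, he, AlgEquiv.trans_apply, MvPolynomial.finSuccEquiv_X_succ]
    simp [MvPolynomial.finSuccEquiv_X_zero]
  have he2 : e (MvPolynomial.X (⟨2, by omega⟩ : Fin (N+3))) =
      Polynomial.C (Polynomial.C (MvPolynomial.X 0)) := by
    rw [h2fin, he, AlgEquiv.trans_apply, MvPolynomial.finSuccEquiv_X_succ]
    simp only [Polynomial.coe_mapAlgEquiv, Polynomial.map_C]
    rw [h1fin']
    congr 1
    exact MvPolynomial.finSuccEquiv_X_succ
  have heC : ∀ x : K, e (MvPolynomial.C x) = ψ x := by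
    intro x
    have hx : (MvPolynomial.C x : MvPolynomial (Fin (N+3)) K) =
        algebraMap K (MvPolynomial (Fin (N+3)) K) x := by rw [MvPolynomial.algebraMap_eq]
    rw [hx, AlgEquiv.commutes, hψa]
    simp [Polynomial.algebraMap_apply, MvPolynomial.algebraMap_eq]
  have hs1 : a1 * δ * c1K = a := by rw [hc1K]; field_simp
  have hs2 : a1 * c1K = a2 * c2K := by rw [hc1K, hc2K]; field_simp
  have hs3 : a1 * c1K = a / δ := by rw [hc1K]; field_simp
  have hF1 : e f1 = ψ (a1 * δ) * q1 := by
    rw [hf1, map_add, map_mul, map_pow, heC, heC, he0, hq1, ← hψa c1K, mul_add, ← map_mul, hs1]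
  have hCX : (Polynomial.C (Polynomial.X : Polynomial (MvPolynomial (Fin (N+1)) K))) ^ m =
      Polynomial.C (Polynomial.X ^ m) :=
    (map_pow (Polynomial.C : Polynomial (MvPolynomial (Fin (N+1)) K) →+* _) _ _).symm
  have hmul12 : ψ a1 * Polynomial.C (Polynomial.C (MvPolynomial.C c1K)) =
      ψ a2 * Polynomial.C (Polynomial.C (MvPolynomial.C c2K)) := by
    rw [← hψa, ← hψa, ← map_mul, ← map_mul, hs2]
  have hF2 : e f2 = ψ a1 * q1 - ψ a2 * Polynomial.C q2 := by
    rw [hf2, map_sub, map_mul, map_mul, map_pow, map_pow, heC, heC, he0, he1, hq1, hq2,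
      hCX, map_add Polynomial.C]
    linear_combination -hmul12
  have hmul13 : ψ a1 * Polynomial.C (Polynomial.C (MvPolynomial.C c1K)) =
      Polynomial.C (Polynomial.C (MvPolynomial.C (a / δ))) := by
    rw [← hψa, ← map_mul, hs3, hψa]
  have hCX2 : (Polynomial.C (Polynomial.C (MvPolynomial.X (0 : Fin (N+1)))) :
      Polynomial (Polynomial (MvPolynomial (Fin (N+1)) K))) ^ m
      = Polynomial.C (Polynomial.C ((MvPolynomial.X (0 : Fin (N+1))) ^ m)) := by
    rw [← map_pow, ← map_pow]
  have hmul3 : ψ a3 * Polynomial.C (Polynomial.C ((MvPolynomial.X (0 : Fin (N+1))) ^ m)) =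
      Polynomial.C (Polynomial.C (MvPolynomial.C a3 * (MvPolynomial.X (0 : Fin (N+1))) ^ m)) := by
    rw [hψa, ← map_mul, ← map_mul]
  have hF3 : e f3 = ψ a1 * q1 - Polynomial.C (Polynomial.C β) := by
    rw [hf3, map_sub, map_mul, map_mul, map_pow, map_pow, heC, heC, he0, he2, hq1, hβdef,
      hCX2, map_add Polynomial.C, map_add Polynomial.C]
    linear_combination -hmul13 - hmul3
  have hspan1 : Ideal.span {e f1} = Ideal.span {q1} := by
    rw [hF1]; exact Ideal.span_singleton_mul_left_unit (hψu _ (mul_ne_zero h1 hδ)) _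
  have ha1δ : a1 * δ ≠ 0 := mul_ne_zero h1 hδ
  have hu1 : ψ ((a1 * δ)⁻¹) * ψ (a1 * δ) = 1 := by
    rw [← map_mul, inv_mul_cancel₀ ha1δ, map_one]
  have ha2ψ : ψ a2⁻¹ * ψ a2 = 1 := by rw [← map_mul, inv_mul_cancel₀ h2, map_one]
  have hbψ : ψ (a2⁻¹ * a1) = ψ a2⁻¹ * ψ a1 := map_mul _ _ _
  have hspan2 : Ideal.span {e f1, e f2} = Ideal.span {q1, Polynomial.C q2} := by
    apply le_antisymm
    · rw [Ideal.span_le]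
      rintro x (rfl | rfl)
      · exact Ideal.mem_span_pair.mpr ⟨ψ (a1 * δ), 0, by rw [hF1]; ring⟩
      · exact Ideal.mem_span_pair.mpr ⟨ψ a1, -ψ a2, by rw [hF2]; ring⟩
    · rw [Ideal.span_le]
      rintro x (rfl | rfl)
      · refine Ideal.mem_span_pair.mpr ⟨ψ ((a1 * δ)⁻¹), 0, ?_⟩
        linear_combination ψ ((a1 * δ)⁻¹) * hF1 + q1 * hu1
      · refine Ideal.mem_span_pair.mpr ⟨ψ (a2⁻¹ * a1) * ψ ((a1 * δ)⁻¹), -ψ a2⁻¹, ?_⟩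
        linear_combination (ψ (a2⁻¹ * a1) * ψ ((a1 * δ)⁻¹)) * hF1 - ψ a2⁻¹ * hF2 +
          (ψ ((a1 * δ)⁻¹) * ψ (a1 * δ) * q1) * hbψ + (ψ a2⁻¹ * ψ a1 * q1) * hu1 +
          Polynomial.C q2 * ha2ψ
  have hcoe : ∀ x : MvPolynomial (Fin (N+3)) K, e.toRingEquiv x = e x := fun _ => rfl
  have hmemequiv : ∀ (s : Set (MvPolynomial (Fin (N+3)) K)) (x : MvPolynomial (Fin (N+3)) K),
      x ∈ Ideal.span s ↔ e x ∈ Ideal.span (⇑e '' s) := by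
    intro s x
    have := aux_mem_span_equiv (S := Polynomial (Polynomial (MvPolynomial (Fin (N+1)) K)))
      e.toRingEquiv s x
    simpa [hcoe] using this
  have hq2ne : q2 ≠ 0 := (Polynomial.monic_X_pow_add_C _ hm').ne_zero
  have cond2 : ∀ g, f2 * g ∈ Ideal.span {f1} → g ∈ Ideal.span {f1} := by
    intro g hg
    rw [hmemequiv {f1} (f2 * g), Set.image_singleton, hspan1, map_mul] at hg
    have hq1mem : q1 ∈ Ideal.span {q1} := Ideal.mem_span_singleton_self _
    have hkey : Polynomial.C (Polynomial.C (MvPolynomial.C a2) * q2) * e g ∈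
        Ideal.span {q1} := by
      have heq : Polynomial.C (Polynomial.C (MvPolynomial.C a2) * q2) * e g =
          q1 * (ψ a1 * e g) - e f2 * e g := by
        rw [map_mul Polynomial.C, ← hψa a2]
        linear_combination (e g) * hF2
      rw [heq]
      exact Ideal.sub_mem _ (Ideal.mul_mem_right _ _ hq1mem) hg
    have hdne : Polynomial.C (MvPolynomial.C a2) * q2 ≠ 0 := by
      refine mul_ne_zero ?_ hq2ne
      simpa using h2
    have := aux_main1 m hm' (Polynomial.C (MvPolynomial.C c1K))
      (Polynomial.C (MvPolynomial.C a2) * q2) hdne (e g) (by rw [← hq1]; exact hkey)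
    rw [hmemequiv {f1} g, Set.image_singleton, hspan1, hq1]
    exact this
  have cond3 : ∀ g, f3 * g ∈ Ideal.span {f1, f2} → g ∈ Ideal.span {f1, f2} := by
    intro g hg
    rw [hmemequiv {f1, f2} (f3 * g), Set.image_insert_eq, Set.image_singleton, hspan2,
      map_mul] at hg
    have hq1mem : q1 ∈ Ideal.span {q1, Polynomial.C q2} := Ideal.subset_span (by simp)
    have hkey : Polynomial.C (Polynomial.C β) * e g ∈ Ideal.span {q1, Polynomial.C q2} := by
      have heq : Polynomial.C (Polynomial.C β) * e g = q1 * (ψ a1 * e g) - e f3 * e g := by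
        linear_combination (e g) * hF3
      rw [heq]
      exact Ideal.sub_mem _ (Ideal.mul_mem_right _ _ hq1mem) hg
    have := aux_main2 m hm' (MvPolynomial.C c1K) (MvPolynomial.C c2K) β hβ (e g)
      (by rw [← hq1, ← hq2]; exact hkey)
    rw [hmemequiv {f1, f2} g, Set.image_insert_eq, Set.image_singleton, hspan2, hq1, hq2]
    exact this
  have cond4 : Ideal.span {f1, f2, f3} ≠ ⊤ := by
    obtain ⟨α, hα⟩ := IsAlgClosed.exists_pow_nat_eq (k := AlgebraicClosure K)
      (algebraMap K (AlgebraicClosure K) (-(a / (a1 * δ)))) (Nat.pos_of_ne_zero hm')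
    obtain ⟨b2, hb2⟩ := IsAlgClosed.exists_pow_nat_eq (k := AlgebraicClosure K)
      (algebraMap K (AlgebraicClosure K) (-(a / (a2 * δ)))) (Nat.pos_of_ne_zero hm')
    obtain ⟨b3, hb3⟩ := IsAlgClosed.exists_pow_nat_eq (k := AlgebraicClosure K)
      (algebraMap K (AlgebraicClosure K) (-(a / (a3 * δ)))) (Nat.pos_of_ne_zero hm')
    refine aux_span_ne_top _ (AlgebraicClosure K) (fun i : Fin (N+3) =>
      if (i : ℕ) = 0 then α else if (i : ℕ) = 1 then b2 else if (i : ℕ) = 2 then b3 else 0) ?_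
    rintro f (rfl | rfl | rfl)
    · rw [hf1]
      simp only [map_add, map_mul, map_pow, MvPolynomial.aeval_X, MvPolynomial.aeval_C]
      norm_num
      rw [hα]
      have hcalc := congrArg (algebraMap K (AlgebraicClosure K))
        (show a1 * δ * -(a / (a1 * δ)) + a = (0 : K) by field_simp; ring)
      rw [map_add, map_mul, map_mul, map_zero] at hcalc
      exact hcalc
    · rw [hf2]
      simp only [map_sub, map_mul, map_pow, MvPolynomial.aeval_X, MvPolynomial.aeval_C]
      norm_num
      rw [hα, hb2]
      have hcalc := congrArg (algebraMap K (AlgebraicClosure K))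
        (show a1 * -(a / (a1 * δ)) - a2 * -(a / (a2 * δ)) = (0 : K) by field_simp; ring)
      rw [map_sub, map_mul, map_mul, map_zero] at hcalc
      exact hcalc
    · rw [hf3]
      simp only [map_sub, map_mul, map_pow, MvPolynomial.aeval_X, MvPolynomial.aeval_C]
      norm_num
      rw [hα, hb3]
      have hcalc := congrArg (algebraMap K (AlgebraicClosure K))
        (show a1 * -(a / (a1 * δ)) - a3 * -(a / (a3 * δ)) = (0 : K) by field_simp; ring)
      rw [map_sub, map_mul, map_mul, map_zero] at hcalc
      exact hcalc
  rw [RingTheory.Sequence.isRegular_iff]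
  constructor
  · rw [RingTheory.Sequence.isWeaklyRegular_iff]
    intro i hi
    simp only [List.length_cons, List.length_nil] at hi
    interval_cases i
    · simp only [List.take_zero, List.getElem_cons_zero]
      apply aux_quot
      intro g hg
      simp only [Ideal.ofList_nil, Ideal.mem_bot] at hg ⊢
      rcases mul_eq_zero.mp hg with h | h
      · exact absurd h hf1ne
      · exact h
    · simp only [List.take_succ_cons, List.take_zero, List.getElem_cons_succ,
        List.getElem_cons_zero]
      apply aux_quot
      intro g hg
      rw [Ideal.ofList_singleton] at hg ⊢
      exact cond2 g hg
    · simp only [List.take_succ_cons, List.take_zero, List.getElem_cons_succ,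
        List.getElem_cons_zero]
      apply aux_quot
      intro g hg
      have hofl : Ideal.ofList [f1, f2] = Ideal.span {f1, f2} := by
        rw [Ideal.ofList_cons, Ideal.ofList_singleton, Ideal.span_insert]
      rw [hofl] at hg ⊢
      exact cond3 g hg
  · intro htop
    apply cond4
    have hofl : Ideal.ofList [f1, f2, f3] = Ideal.span {f1, f2, f3} := by
      rw [Ideal.ofList_cons, Ideal.ofList_cons, Ideal.ofList_singleton, ← Ideal.span_insert,
        ← Ideal.span_insert]
    have hsm : (Ideal.ofList [f1, f2, f3] • ⊤ :
        Submodule (MvPolynomial (Fin (N+3)) K) (MvPolynomial (Fin (N+3)) K)) =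
        Ideal.ofList [f1, f2, f3] := by
      rw [smul_eq_mul, Ideal.mul_top]
    rw [hsm] at htop
    rw [← hofl]
    exact htop.symm
end

section
/- Let x be a common zero of f and all its partial derivatives, where f = (a_1 X_1^m + ... + a_n X_n^m + a)^k - b X_1⋯X_n over a field of characteristic not dividing mk, with a, b, a_i nonzero, and suppose all coordinates x_j are nonzero. Then, setting g = a_1 X_1^m + ... + a_n X_n^m + a, one has g(x) = km a_j x_j^m for every j, a_1 x_1^m = a_j x_j^m for every j, and a_1 (n - km) x_1^m + a = 0. -/
open MvPolynomial Finset in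
lemma pderiv_prod_X_notmem' {K : Type*} [CommRing K] {n : ℕ} (j : Fin n)
    (s : Finset (Fin n)) (hj : j ∉ s) :
    MvPolynomial.pderiv j (∏ i ∈ s, (X i : MvPolynomial (Fin n) K)) = 0 := by
  classical
  induction s using Finset.induction_on with
  | empty => simp
  | @insert a s ha ih =>
    rw [Finset.prod_insert ha, pderiv_mul, ih (fun h => hj (Finset.mem_insert_of_mem h)),
      pderiv_X_of_ne (by rintro rfl; exact hj (Finset.mem_insert_self a s))]
    ring

open MvPolynomial Finset in
lemma pderiv_prod_X' {K : Type*} [CommRing K] {n : ℕ} (j : Fin n) :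
    MvPolynomial.pderiv j (∏ i, (X i : MvPolynomial (Fin n) K))
      = ∏ i ∈ univ.erase j, X i := by
  rw [← Finset.mul_prod_erase univ _ (mem_univ j), pderiv_mul, pderiv_X_self,
    pderiv_prod_X_notmem' j _ (notMem_erase j univ)]
  ring

open MvPolynomial in
/-- If `x` is a common zero of `f = (∑ a_i X_i^m + a)^k - b X_1⋯X_n` and all its partial
derivatives, with all coordinates nonzero, then `g(x) = km a_j x_j^m` for all `j`,
`a_1 x_1^m = a_j x_j^m` for all `j`, and `a_1 (n - km) x_1^m + a = 0`. -/
theorem stmt13 (K : Type*) [Field K] (p n m k : ℕ) [CharP K p]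
    (hn : 3 ≤ n) (hm : 2 ≤ m) (hk : 2 ≤ k) (hp : ¬ p ∣ m * k)
    (a b : K) (ha : a ≠ 0) (hb : b ≠ 0) (c : Fin n → K) (hc : ∀ i, c i ≠ 0)
    (x : Fin n → K) (hx : ∀ j, x j ≠ 0)
    (hf : MvPolynomial.eval x
      ((∑ i, C (c i) * X i ^ m + C a) ^ k - C b * ∏ i, X i) = 0)
    (hd : ∀ j, MvPolynomial.eval x (MvPolynomial.pderiv j
      ((∑ i, C (c i) * X i ^ m + C a) ^ k - C b * ∏ i, X i)) = 0) :
    (∀ j, MvPolynomial.eval x (∑ i, C (c i) * X i ^ m + C a)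
        = (k : K) * (m : K) * c j * x j ^ m) ∧
    (∀ j, c ⟨0, by omega⟩ * x ⟨0, by omega⟩ ^ m = c j * x j ^ m) ∧
    c ⟨0, by omega⟩ * ((n : K) - (k : K) * (m : K)) * x ⟨0, by omega⟩ ^ m + a = 0 := by
  classical
  set G : K := ∑ i, c i * x i ^ m + a with hGdef
  have hGeval : MvPolynomial.eval x (∑ i, C (c i) * X i ^ m + C a) = G := by
    simp [hGdef]
  -- f(x) = 0 gives G^k = b * ∏ x i
  have hGk : G ^ k = b * ∏ i, x i := by
    have h := hf
    rw [map_sub, map_pow, hGeval, map_mul, eval_C, map_prod] at h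
    simp only [eval_X] at h
    exact sub_eq_zero.mp h
  have hprodne : (∏ i, x i) ≠ 0 := Finset.prod_ne_zero_iff.mpr fun i _ => hx i
  have hGne : G ≠ 0 := by
    intro h
    rw [h, zero_pow (by omega)] at hGk
    exact mul_ne_zero hb hprodne hGk.symm
  -- evaluation of the derivative of g
  have hDg : ∀ j, MvPolynomial.eval x
      (MvPolynomial.pderiv j (∑ i, C (c i) * X i ^ m + C a))
        = c j * ((m : K) * x j ^ (m - 1)) := by
    intro j
    rw [map_add, pderiv_C, add_zero, map_sum]
    rw [Finset.sum_eq_single j]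
    · simp [pderiv_C_mul, pderiv_pow, pderiv_X_self]
    · intro i _ hij
      simp [pderiv_C_mul, pderiv_pow, pderiv_X_of_ne (Ne.symm hij), Pi.single_eq_of_ne hij]
    · simp
  -- the main identity: G = k m c_j x_j^m for each j
  have key : ∀ j, G = (k : K) * (m : K) * c j * x j ^ m := by
    intro j
    have h := hd j
    rw [map_sub, pderiv_pow, pderiv_C_mul, pderiv_prod_X'] at h
    rw [map_sub, map_mul, map_mul, map_pow, hGeval, hDg j, map_mul, eval_C, map_prod] at h
    simp only [eval_X, map_natCast] at h
    have hxe : x j * ∏ i ∈ Finset.univ.erase j, x i = ∏ i, x i :=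
      Finset.mul_prod_erase Finset.univ x (Finset.mem_univ j)
    have hxp : x j ^ m = x j ^ (m - 1) * x j := by
      rw [← pow_succ]; congr 1; omega
    have hk1 : G * G ^ (k - 1) = G ^ k := by
      rw [← pow_succ']; congr 1; omega
    have e1 : ((k : K) * (m : K) * c j * x j ^ m) * G ^ (k - 1) = G * G ^ (k - 1) := by
      rw [hxp, hk1, hGk, ← hxe]
      linear_combination x j * h
    exact (mul_right_cancel₀ (pow_ne_zero _ hGne) e1).symm
  have hkm : (k : K) * (m : K) ≠ 0 := by
    have h1 : ((m * k : ℕ) : K) ≠ 0 := by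
      rw [Ne, CharP.cast_eq_zero_iff K p]
      exact hp
    push_cast at h1
    intro h
    exact h1 (by rw [mul_comm]; exact h)
  have part2 : ∀ j, c ⟨0, by omega⟩ * x ⟨0, by omega⟩ ^ m = c j * x j ^ m := by
    intro j
    have h0 := key ⟨0, by omega⟩
    have hj := key j
    have h2 : (k : K) * (m : K) * (c ⟨0, by omega⟩ * x ⟨0, by omega⟩ ^ m)
        = (k : K) * (m : K) * (c j * x j ^ m) := by
      linear_combination hj - h0
    exact mul_left_cancel₀ hkm h2
  refine ⟨fun j => by rw [hGeval]; exact key j, part2, ?_⟩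
  have hGsum : G = (n : K) * (c ⟨0, by omega⟩ * x ⟨0, by omega⟩ ^ m) + a := by
    rw [hGdef]
    congr 1
    rw [Finset.sum_congr rfl (fun i _ => (part2 i).symm), Finset.sum_const,
      Finset.card_univ, Fintype.card_fin, nsmul_eq_mul]
  have h0 := key ⟨0, by omega⟩
  rw [hGsum] at h0
  linear_combination h0
end
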